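/- Let N be a positive integer, let X and Y_1, …, Y_N be N+1 mutually independent nonnegative real-valued random variables, and let a > 0 be a real constant. Then E[ln(1 + X / (Σ_{i=1}^N Y_i + a))] = ∫_0^∞ (e^{−a z}/z) · (1 − E[e^{−z X}]) · ∏_{i=1}^N E[e^{−z Y_i}] dz, where the integral is the Lebesgue integral over (0, ∞). -/

import Mathlib

open MeasureTheory ProbabilityTheory Set

lemma hamdi_exp_int {t : ℝ} (ht : 0 < t) :
    ∫ z in Ioi (0:ℝ), Real.exp (-(t * z)) = 1 / t := by
  have hderiv : ∀ x ∈ Ici (0:ℝ),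
      HasDerivAt (fun z => -Real.exp (-(t * z)) / t) (Real.exp (-(t * x))) x := by
    intro x _
    have h1 : HasDerivAt (fun z : ℝ => -(t * z)) (-t) x := by
      simpa using ((hasDerivAt_id x).const_mul t).fun_neg
    have h2 := (Real.hasDerivAt_exp (-(t * x))).comp x h1
    have h3 := h2.fun_neg.div_const t
    exact h3.congr_deriv (by field_simp)
  have hint : IntegrableOn (fun x => Real.exp (-(t * x))) (Ioi (0:ℝ)) := by
    simpa [neg_mul] using exp_neg_integrableOn_Ioi 0 ht
  have htend : Filter.Tendsto (fun z => -Real.exp (-(t * z)) / t) Filter.atTop (nhds 0) := by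
    have h0 : Filter.Tendsto (fun z : ℝ => t * z) Filter.atTop Filter.atTop :=
      Filter.Tendsto.const_mul_atTop ht Filter.tendsto_id
    have h1 : Filter.Tendsto (fun z : ℝ => Real.exp (-(t * z))) Filter.atTop (nhds 0) := by
      have := Real.tendsto_exp_atBot.comp (Filter.tendsto_neg_atBot_iff.mpr h0)
      simpa [Function.comp_def] using this
    have := (h1.neg).div_const t
    simpa using this
  have := integral_Ioi_of_hasDerivAt_of_tendsto' hderiv hint htend
  rw [this]
  field_simp
  simp

lemma hamdi_frullani {b : ℝ} (x : ℝ) (hb : 0 < b) (hx : 0 ≤ x) :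
    ∫⁻ z in Ioi (0:ℝ),
        ENNReal.ofReal ((Real.exp (-(z * b)) - Real.exp (-(z * (x + b)))) / z)
      = ENNReal.ofReal (Real.log (1 + x / b)) := by
  have hbxb : b ≤ x + b := by linarith
  -- step 1 : pointwise identity as an inner Bochner integral
  have step1 : ∀ z ∈ Ioi (0:ℝ),
      ENNReal.ofReal ((Real.exp (-(z * b)) - Real.exp (-(z * (x + b)))) / z)
        = ∫⁻ t in Ioc b (x + b), ENNReal.ofReal (Real.exp (-(z * t))) := by
    intro z hz
    have hz0 : 0 < z := hz
    have hderiv : ∀ t ∈ Set.uIcc b (x + b),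
        HasDerivAt (fun t => -Real.exp (-(z * t)) / z) (Real.exp (-(z * t))) t := by
      intro t _
      have h1 : HasDerivAt (fun t : ℝ => -(z * t)) (-z) t := by
        simpa using ((hasDerivAt_id t).const_mul z).fun_neg
      have h2 := ((Real.hasDerivAt_exp (-(z * t))).comp t h1).fun_neg.div_const z
      exact h2.congr_deriv (by field_simp)
    have hcont : Continuous fun t : ℝ => Real.exp (-(z * t)) := by continuity
    have hval : ∫ t in b..(x + b), Real.exp (-(z * t))
        = (Real.exp (-(z * b)) - Real.exp (-(z * (x + b)))) / z := by
      rw [intervalIntegral.integral_eq_sub_of_hasDerivAt hderiv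
        (hcont.intervalIntegrable _ _)]
      field_simp
      ring
    have hioc : ∫ t in Ioc b (x + b), Real.exp (-(z * t))
        = (Real.exp (-(z * b)) - Real.exp (-(z * (x + b)))) / z := by
      rw [← intervalIntegral.integral_of_le hbxb, hval]
    rw [← hioc]
    exact ofReal_integral_eq_lintegral_ofReal
      (hcont.integrableOn_Ioc)
      (ae_of_all _ fun t => (Real.exp_pos _).le)
  rw [setLIntegral_congr_fun measurableSet_Ioi step1]
  -- step 2 : swap the two integrals (Tonelli)
  have hmeas : AEMeasurable (Function.uncurry fun (z t : ℝ) =>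
      ENNReal.ofReal (Real.exp (-(z * t))))
      ((volume.restrict (Ioi (0:ℝ))).prod (volume.restrict (Ioc b (x + b)))) := by
    apply Measurable.aemeasurable
    apply Measurable.ennreal_ofReal
    exact (measurable_fst.mul measurable_snd).neg.exp
  rw [lintegral_lintegral_swap hmeas]
  -- step 3 : inner integral in z
  have step3 : ∀ t ∈ Ioc b (x + b),
      ∫⁻ z in Ioi (0:ℝ), ENNReal.ofReal (Real.exp (-(z * t)))
        = ENNReal.ofReal (1 / t) := by
    intro t ht
    have ht0 : 0 < t := lt_of_lt_of_le hb ht.1.le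
    have hint : IntegrableOn (fun z => Real.exp (-(t * z))) (Ioi (0:ℝ)) := by
      simpa [neg_mul] using exp_neg_integrableOn_Ioi 0 ht0
    calc ∫⁻ z in Ioi (0:ℝ), ENNReal.ofReal (Real.exp (-(z * t)))
        = ∫⁻ z in Ioi (0:ℝ), ENNReal.ofReal (Real.exp (-(t * z))) := by
          simp_rw [mul_comm]
      _ = ENNReal.ofReal (∫ z in Ioi (0:ℝ), Real.exp (-(t * z))) :=
          (ofReal_integral_eq_lintegral_ofReal hint
            (ae_of_all _ fun z => (Real.exp_pos _).le)).symm
      _ = ENNReal.ofReal (1 / t) := by rw [hamdi_exp_int ht0]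
  rw [setLIntegral_congr_fun measurableSet_Ioc step3]
  -- step 4 : the remaining integral of 1/t
  have hint : IntegrableOn (fun t : ℝ => 1 / t) (Ioc b (x + b)) := by
    rw [← intervalIntegrable_iff_integrableOn_Ioc_of_le hbxb]
    apply intervalIntegral.intervalIntegrable_one_div (f := fun t : ℝ => t)
    · intro t ht
      rw [Set.uIcc_of_le hbxb] at ht
      exact (lt_of_lt_of_le hb ht.1).ne'
    · exact continuousOn_id
  rw [← ofReal_integral_eq_lintegral_ofReal hint
    ((ae_restrict_iff' measurableSet_Ioc).mpr (ae_of_all _ fun t ht =>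
      div_nonneg one_pos.le (hb.trans ht.1).le))]
  congr 1
  rw [← intervalIntegral.integral_of_le hbxb,
    integral_one_div_of_pos hb (by linarith)]
  congr 1
  field_simp
  ring

lemma hamdi_integral_prod {Ω : Type*} [MeasureSpace Ω] [IsProbabilityMeasure (ℙ : Measure Ω)]
    {M : ℕ} (F : Fin M → Ω → ℝ) (hmeas : ∀ i, Measurable (F i))
    (hindep : iIndepFun F ℙ) (s : Finset (Fin M)) :
    ∫ ω, ∏ i ∈ s, F i ω = ∏ i ∈ s, ∫ ω, F i ω := by
  classical
  induction s using Finset.cons_induction with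
  | empty => simp
  | cons a s ha ih =>
    have hfn : (∏ i ∈ s, F i) = fun ω => ∏ i ∈ s, F i ω :=
      funext fun ω => Finset.prod_apply ω s F
    have hprodmeas : Measurable (∏ i ∈ s, F i) := by
      rw [hfn]; exact Finset.measurable_prod s fun i _ => hmeas i
    have hind : IndepFun (F a) (∏ i ∈ s, F i) ℙ :=
      (hindep.indepFun_finsetProd_of_notMem hmeas ha).symm
    have key := hind.integral_fun_mul_eq_mul_integral (hmeas a).aestronglyMeasurable
      hprodmeas.aestronglyMeasurable
    simp only [Finset.prod_apply] at key
    simp only [Finset.prod_cons]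
    rw [key]
    rw [hfn] at *
    rw [ih]

-- the key factorization at a fixed z > 0
lemma hamdi_key {Ω : Type*} [MeasureSpace Ω] [IsProbabilityMeasure (ℙ : Measure Ω)]
    (N : ℕ) (X : Ω → ℝ) (Y : Fin N → Ω → ℝ) (a : ℝ) (ha : 0 < a)
    (hX : Measurable X) (hY : ∀ i, Measurable (Y i))
    (hXnn : ∀ ω, 0 ≤ X ω) (hYnn : ∀ i ω, 0 ≤ Y i ω)
    (hindep : iIndepFun (Fin.cons X Y : Fin (N + 1) → Ω → ℝ) ℙ)
    {z : ℝ} (hz : 0 < z) :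
    ∫⁻ ω, ENNReal.ofReal ((Real.exp (-(z * ((∑ i, Y i ω) + a)))
        - Real.exp (-(z * (X ω + ((∑ i, Y i ω) + a))))) / z)
      = ENNReal.ofReal (Real.exp (-a * z) / z *
        ((1 - ∫ ω, Real.exp (-(z * X ω))) * ∏ i, ∫ ω, Real.exp (-(z * Y i ω)))) := by
  classical
  set S : Ω → ℝ := fun ω => ∑ i, Y i ω with hSdef
  have hS : Measurable S := Finset.measurable_sum _ fun i _ => hY i
  have hSnn : ∀ ω, 0 ≤ S ω := fun ω => Finset.sum_nonneg fun i _ => hYnn i ω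
  set G : Ω → ℝ := fun ω => Real.exp (-(z * X ω)) with hGdef
  set H : Fin N → Ω → ℝ := fun i ω => Real.exp (-(z * Y i ω)) with hHdef
  set Fz : Ω → ℝ := fun ω =>
    (Real.exp (-(z * (S ω + a))) - Real.exp (-(z * (X ω + (S ω + a))))) / z with hFzdef
  -- measurability
  have hGmeas : Measurable G := ((hX.const_mul z).neg).exp
  have hHmeas : ∀ i, Measurable (H i) := fun i => (((hY i).const_mul z).neg).exp
  have hHP : Measurable fun ω => ∏ i, H i ω :=
    Finset.measurable_prod _ fun i _ => hHmeas i
  have hFzmeas : Measurable Fz := by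
    apply Measurable.div _ measurable_const
    exact (((hS.add measurable_const).const_mul z).neg.exp).sub
      (((hX.add (hS.add measurable_const)).const_mul z).neg.exp)
  -- bounds
  have hHle : ∀ i ω, H i ω ≤ 1 := fun i ω =>
    Real.exp_le_one_iff.mpr (by nlinarith [hYnn i ω, hz.le])
  have hHnn : ∀ i ω, 0 ≤ H i ω := fun i ω => (Real.exp_pos _).le
  have hGle : ∀ ω, G ω ≤ 1 := fun ω =>
    Real.exp_le_one_iff.mpr (by nlinarith [hXnn ω, hz.le])
  have hGnn : ∀ ω, 0 ≤ G ω := fun ω => (Real.exp_pos _).le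
  have hHPle : ∀ ω, ∏ i, H i ω ≤ 1 := fun ω =>
    Finset.prod_le_one (fun i _ => hHnn i ω) (fun i _ => hHle i ω)
  have hHPnn : ∀ ω, 0 ≤ ∏ i, H i ω := fun ω =>
    Finset.prod_nonneg fun i _ => hHnn i ω
  -- Fz is nonnegative and bounded by 1/z
  have hFznn : ∀ ω, 0 ≤ Fz ω := by
    intro ω
    apply div_nonneg _ hz.le
    have : z * (S ω + a) ≤ z * (X ω + (S ω + a)) := by nlinarith [hXnn ω]
    simpa using Real.exp_le_exp.mpr (neg_le_neg this)
  have hFzle : ∀ ω, Fz ω ≤ 1 / z := by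
    intro ω
    have h1 : Real.exp (-(z * (S ω + a))) - Real.exp (-(z * (X ω + (S ω + a)))) ≤ 1 := by
      have e1 : Real.exp (-(z * (S ω + a))) ≤ 1 :=
        Real.exp_le_one_iff.mpr (by nlinarith [hSnn ω])
      have e2 := (Real.exp_pos (-(z * (X ω + (S ω + a))))).le
      linarith
    exact (div_le_div_iff_of_pos_right hz).mpr h1
  -- integrabilities (probability measure, bounded functions)
  have hFzint : Integrable Fz ℙ := by
    refine (integrable_const (1 / z)).mono' hFzmeas.aestronglyMeasurable (ae_of_all _ ?_)
    intro ω
    rw [Real.norm_eq_abs, abs_of_nonneg (hFznn ω)]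
    exact hFzle ω
  have hHPint : Integrable (fun ω => ∏ i, H i ω) ℙ := by
    refine (integrable_const (1:ℝ)).mono' hHP.aestronglyMeasurable (ae_of_all _ ?_)
    intro ω
    rw [Real.norm_eq_abs, abs_of_nonneg (hHPnn ω)]
    exact hHPle ω
  have hGHPint : Integrable (fun ω => G ω * ∏ i, H i ω) ℙ := by
    refine (integrable_const (1:ℝ)).mono' (hGmeas.mul hHP).aestronglyMeasurable
      (ae_of_all _ ?_)
    intro ω
    rw [Real.norm_eq_abs, abs_of_nonneg (mul_nonneg (hGnn ω) (hHPnn ω))]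
    exact mul_le_one₀ (hGle ω) (hHPnn ω) (hHPle ω)
  -- independence via composition
  have hconsmeas : ∀ i, Measurable ((Fin.cons X Y : Fin (N+1) → Ω → ℝ) i) := by
    intro i
    induction i using Fin.cases with
    | zero => simpa using hX
    | succ j => simpa using hY j
  set F' : Fin (N + 1) → Ω → ℝ :=
    fun i => (fun x : ℝ => Real.exp (-(z * x))) ∘ ((Fin.cons X Y : Fin (N+1) → Ω → ℝ) i) with hF'def
  have hF'meas : ∀ i, Measurable (F' i) :=
    fun i => (((measurable_id.const_mul z).neg).exp).comp (hconsmeas i)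
  have hF'indep : iIndepFun F' ℙ :=
    hindep.comp (fun _ => fun x : ℝ => Real.exp (-(z * x)))
      (fun _ => ((measurable_id.const_mul z).neg).exp)
  have hF'zero : F' 0 = G := by
    ext ω; simp [hF'def, hGdef, Function.comp]
  have hF'succ : ∀ i : Fin N, F' i.succ = H i := by
    intro i; ext ω; simp [hF'def, hHdef, Function.comp]
  -- product formulas
  have hall := hamdi_integral_prod F' hF'meas hF'indep Finset.univ
  have htail := hamdi_integral_prod F' hF'meas hF'indep
    (Finset.univ.map (Fin.succEmb N))
  have EL_all : ∫ ω, G ω * ∏ i, H i ω = (∫ ω, G ω) * ∏ i, ∫ ω, H i ω := by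
    have l1 : ∀ ω, ∏ i, F' i ω = G ω * ∏ i, H i ω := by
      intro ω
      rw [Fin.prod_univ_succ]
      simp [hF'zero, hF'succ]
    have l2 : ∏ i, ∫ ω, F' i ω = (∫ ω, G ω) * ∏ i, ∫ ω, H i ω := by
      rw [Fin.prod_univ_succ]
      simp [hF'zero, hF'succ]
    rw [← l2, ← hall]
    exact integral_congr_ae (ae_of_all _ fun ω => (l1 ω).symm)
  have EL_tail : ∫ ω, ∏ i, H i ω = ∏ i, ∫ ω, H i ω := by
    have l1 : ∀ ω, ∏ j ∈ Finset.univ.map (Fin.succEmb N), F' j ω = ∏ i, H i ω := by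
      intro ω
      rw [Finset.prod_map]
      exact Finset.prod_congr rfl fun i _ => congrFun (hF'succ i) ω
    have l2 : ∏ j ∈ Finset.univ.map (Fin.succEmb N), ∫ ω, F' j ω
        = ∏ i, ∫ ω, H i ω := by
      rw [Finset.prod_map]
      exact Finset.prod_congr rfl fun i _ => congrArg (integral ℙ) (hF'succ i)
    rw [← l2, ← htail]
    exact integral_congr_ae (ae_of_all _ fun ω => (l1 ω).symm)
  -- pointwise algebraic identity
  have hFz_eq : ∀ ω, Fz ω
      = Real.exp (-a * z) / z * (∏ i, H i ω - G ω * ∏ i, H i ω) := by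
    intro ω
    have hsum : ∀ c : ℝ, Real.exp (-a * z) * Real.exp (-(z * c)) * ∏ i, H i ω
        = Real.exp (-(z * (c + (S ω + a)))) := by
      intro c
      rw [hHdef]
      simp only
      rw [← Real.exp_sum, ← Real.exp_add, ← Real.exp_add]
      congr 1
      have : ∑ i, -(z * Y i ω) = -(z * S ω) := by
        rw [hSdef]
        simp only [← Finset.sum_neg_distrib, Finset.mul_sum]
      rw [this]
      ring
    have e1 : Real.exp (-(z * (S ω + a))) = Real.exp (-a * z) * ∏ i, H i ω := by
      have := hsum 0
      simpa using this.symm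
    have e2 : Real.exp (-(z * (X ω + (S ω + a))))
        = Real.exp (-a * z) * (G ω * ∏ i, H i ω) := by
      have := hsum (X ω)
      rw [hGdef]
      simp only
      rw [← this]
      ring
    rw [hFzdef]
    simp only
    rw [e1, e2]
    ring
  -- put everything together
  calc ∫⁻ ω, ENNReal.ofReal (Fz ω)
      = ENNReal.ofReal (∫ ω, Fz ω) :=
        (ofReal_integral_eq_lintegral_ofReal hFzint (ae_of_all _ hFznn)).symm
    _ = ENNReal.ofReal (Real.exp (-a * z) / z *
        ((1 - ∫ ω, G ω) * ∏ i, ∫ ω, H i ω)) := by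
        congr 1
        rw [integral_congr_ae (ae_of_all _ hFz_eq), integral_const_mul,
          integral_sub hHPint hGHPint, EL_all, EL_tail]
        ring

/-- Lemma 1 of the paper (Hamdi's integral identity): let `X, Y_1, …, Y_N` be `N + 1`
mutually independent nonnegative real random variables and `a > 0`. Then
`E[ln(1 + X/(Σ_i Y_i + a))]
  = ∫_0^∞ (e^{−a z}/z) (1 − E[e^{−z X}]) ∏_{i=1}^N E[e^{−z Y_i}] dz`. -/
theorem stmt_0 {Ω : Type*} [MeasureSpace Ω] [IsProbabilityMeasure (ℙ : Measure Ω)]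
    (N : ℕ) (hN : 0 < N) (X : Ω → ℝ) (Y : Fin N → Ω → ℝ) (a : ℝ) (ha : 0 < a)
    (hX : Measurable X) (hY : ∀ i, Measurable (Y i))
    (hXnn : ∀ ω, 0 ≤ X ω) (hYnn : ∀ i ω, 0 ≤ Y i ω)
    (hindep : iIndepFun (Fin.cons X Y : Fin (N + 1) → Ω → ℝ) ℙ) :
    (∫ ω, Real.log (1 + X ω / (∑ i, Y i ω + a))) =
      ∫ z in Ioi (0 : ℝ), Real.exp (-a * z) / z *
        ((1 - ∫ ω, Real.exp (-(z * X ω))) * ∏ i, ∫ ω, Real.exp (-(z * Y i ω))) := by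
  classical
  have hS : Measurable fun ω => ∑ i, Y i ω := Finset.measurable_sum _ fun i _ => hY i
  have hSnn : ∀ ω, 0 ≤ ∑ i, Y i ω := fun ω => Finset.sum_nonneg fun i _ => hYnn i ω
  have hb : ∀ ω, 0 < (∑ i, Y i ω) + a := fun ω => by have := hSnn ω; linarith
  -- left side as a lower integral
  have hLmeas : AEStronglyMeasurable (fun ω => Real.log (1 + X ω / (∑ i, Y i ω + a))) ℙ :=
    ((measurable_const.add (hX.div (hS.add measurable_const))).log).aestronglyMeasurable
  have hLnn : ∀ ω, 0 ≤ Real.log (1 + X ω / (∑ i, Y i ω + a)) := fun ω =>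
    Real.log_nonneg (by nlinarith [div_nonneg (hXnn ω) (hb ω).le])
  -- right side integrand and its properties
  set g : ℝ → ℝ := fun z => Real.exp (-a * z) / z *
      ((1 - ∫ ω, Real.exp (-(z * X ω))) * ∏ i, ∫ ω, Real.exp (-(z * Y i ω))) with hgdef
  have hgmeas : AEStronglyMeasurable g (volume.restrict (Ioi (0:ℝ))) := by
    have m1 : Measurable fun z : ℝ => ∫ ω, Real.exp (-(z * X ω)) := by
      have : StronglyMeasurable fun p : ℝ × Ω => Real.exp (-(p.1 * X p.2)) :=
        ((measurable_fst.mul (hX.comp measurable_snd)).neg.exp).stronglyMeasurable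
      exact this.integral_prod_right'.measurable
    have m2 : ∀ i, Measurable fun z : ℝ => ∫ ω, Real.exp (-(z * Y i ω)) := by
      intro i
      have : StronglyMeasurable fun p : ℝ × Ω => Real.exp (-(p.1 * Y i p.2)) :=
        ((measurable_fst.mul ((hY i).comp measurable_snd)).neg.exp).stronglyMeasurable
      exact this.integral_prod_right'.measurable
    have : Measurable g := by
      apply Measurable.mul
      · exact ((measurable_id.const_mul (-a)).exp).div measurable_id
      · exact (measurable_const.sub m1).mul (Finset.measurable_prod _ fun i _ => m2 i)
    exact this.aestronglyMeasurable
  have hgnn : ∀ᵐ z ∂(volume.restrict (Ioi (0:ℝ))), 0 ≤ g z := by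
    refine (ae_restrict_iff' measurableSet_Ioi).mpr (ae_of_all _ fun z hz => ?_)
    have hz : (0:ℝ) < z := hz
    apply mul_nonneg (div_nonneg (Real.exp_pos _).le hz.le)
    apply mul_nonneg
    · have hle : ∫ ω, Real.exp (-(z * X ω)) ≤ 1 := by
        have hint : Integrable (fun ω => Real.exp (-(z * X ω))) ℙ := by
          refine (integrable_const (1:ℝ)).mono'
            (((hX.const_mul z).neg).exp).aestronglyMeasurable (ae_of_all _ fun ω => ?_)
          rw [Real.norm_eq_abs, abs_of_nonneg (Real.exp_pos _).le]
          exact Real.exp_le_one_iff.mpr (by nlinarith [hXnn ω])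
        calc ∫ ω, Real.exp (-(z * X ω)) ≤ ∫ _ω, (1:ℝ) :=
              integral_mono hint (integrable_const 1) (fun ω =>
                Real.exp_le_one_iff.mpr (by nlinarith [hXnn ω]))
          _ = 1 := by simp
      linarith
    · exact Finset.prod_nonneg fun i _ => integral_nonneg fun ω => (Real.exp_pos _).le
  -- convert both sides to lower integrals
  rw [integral_eq_lintegral_of_nonneg_ae (ae_of_all _ hLnn) hLmeas,
    integral_eq_lintegral_of_nonneg_ae hgnn hgmeas]
  congr 1
  -- pointwise Frullani on the left
  have h1 : ∀ ω, ENNReal.ofReal (Real.log (1 + X ω / (∑ i, Y i ω + a)))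
      = ∫⁻ z in Ioi (0:ℝ), ENNReal.ofReal
          ((Real.exp (-(z * ((∑ i, Y i ω) + a)))
            - Real.exp (-(z * (X ω + ((∑ i, Y i ω) + a))))) / z) := fun ω =>
    (hamdi_frullani (X ω) (hb ω) (hXnn ω)).symm
  calc ∫⁻ ω, ENNReal.ofReal (Real.log (1 + X ω / (∑ i, Y i ω + a)))
      = ∫⁻ ω, ∫⁻ z in Ioi (0:ℝ), ENNReal.ofReal
          ((Real.exp (-(z * ((∑ i, Y i ω) + a)))
            - Real.exp (-(z * (X ω + ((∑ i, Y i ω) + a))))) / z) := by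
        exact lintegral_congr h1
    _ = ∫⁻ z in Ioi (0:ℝ), ∫⁻ ω, ENNReal.ofReal
          ((Real.exp (-(z * ((∑ i, Y i ω) + a)))
            - Real.exp (-(z * (X ω + ((∑ i, Y i ω) + a))))) / z) := by
        apply lintegral_lintegral_swap
        apply Measurable.aemeasurable
        apply Measurable.ennreal_ofReal
        apply Measurable.div _ measurable_snd
        exact ((measurable_snd.mul ((hS.comp measurable_fst).add
            measurable_const)).neg.exp).sub
          ((measurable_snd.mul ((hX.comp measurable_fst).add
            ((hS.comp measurable_fst).add measurable_const))).neg.exp)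
    _ = ∫⁻ z in Ioi (0:ℝ), ENNReal.ofReal (g z) := by
        refine setLIntegral_congr_fun measurableSet_Ioi (fun z hz => ?_)
        exact hamdi_key N X Y a ha hX hY hXnn hYnn hindep hz
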